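/- If γ is a closed C¹ regular curve on S² with thickness Δ[γ] = 1, then the image of γ is a great circle of S². -/

import Mathlib

open Metric Set Real Function MeasureTheory
open scoped RealInnerProductSpace

noncomputable section

abbrev E3 := EuclideanSpace ℝ (Fin 3)

open Classical in
/-- Circumcircle radius of three points in `ℝ³`: `∞` for collinear triples,
otherwise `abc/(4·area)` via Heron's formula. -/
noncomputable def circumradius3 (x y z : E3) : ENNReal :=
  if Collinear ℝ ({x, y, z} : Set E3) then ⊤
  else ENNReal.ofReal (dist x y * dist y z * dist z x /
    Real.sqrt ((dist x y + dist y z + dist z x) * (-dist x y + dist y z + dist z x) *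
      (dist x y - dist y z + dist z x) * (dist x y + dist y z - dist z x)))

/-- Thickness of a set of points (the image of a curve): infimum of circumradii
over all triples of distinct points. -/
noncomputable def thickness (Γ : Set E3) : ENNReal :=
  sInf {r | ∃ x ∈ Γ, ∃ y ∈ Γ, ∃ z ∈ Γ, x ≠ y ∧ y ≠ z ∧ x ≠ z ∧ r = circumradius3 x y z}


lemma unit_eq_of_inner_eq_one {x y : E3} (hx : ‖x‖ = 1) (hy : ‖y‖ = 1)
    (h : ⟪x, y⟫ = 1) : x = y := by
  have h2 : ‖x - y‖ ^ 2 = 0 := by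
    rw [norm_sub_sq_real, hx, hy, h]; ring
  have := pow_eq_zero_iff (n := 2) (by norm_num) |>.mp h2
  rw [norm_eq_zero, sub_eq_zero] at this
  exact this

lemma not_collinear_sphere {x y z : E3} (hx : ‖x‖ = 1) (hy : ‖y‖ = 1) (hz : ‖z‖ = 1)
    (hxy : x ≠ y) (hyz : y ≠ z) (hxz : x ≠ z) :
    ¬ Collinear ℝ ({x, y, z} : Set E3) := by
  intro hcol
  rw [collinear_iff_of_mem (Set.mem_insert x {y, z})] at hcol
  obtain ⟨v, hv⟩ := hcol
  obtain ⟨ty, hty⟩ := hv y (by simp)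
  obtain ⟨tz, htz⟩ := hv z (by simp)
  simp only [vadd_eq_add] at hty htz
  have hvne : v ≠ 0 := by
    intro h0; rw [h0, smul_zero, zero_add] at hty; exact hxy hty.symm
  have key : ∀ t : ℝ, ‖t • v + x‖ = 1 → t * (t * ‖v‖ ^ 2 + 2 * ⟪v, x⟫) = 0 := by
    intro t ht
    have : ‖t • v + x‖ ^ 2 = 1 := by rw [ht]; norm_num
    rw [norm_add_sq_real, norm_smul, real_inner_smul_left, hx, Real.norm_eq_abs] at this
    nlinarith [sq_abs t]
  have hy0 : ty * (ty * ‖v‖ ^ 2 + 2 * ⟪v, x⟫) = 0 := key ty (by rw [← hty]; exact hy)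
  have hz0 : tz * (tz * ‖v‖ ^ 2 + 2 * ⟪v, x⟫) = 0 := key tz (by rw [← htz]; exact hz)
  have htyne : ty ≠ 0 := by
    intro h0; rw [h0, zero_smul, zero_add] at hty; exact hxy hty.symm
  have htzne : tz ≠ 0 := by
    intro h0; rw [h0, zero_smul, zero_add] at htz; exact hxz htz.symm
  have h1 : ty * ‖v‖ ^ 2 + 2 * ⟪v, x⟫ = 0 := by
    rcases mul_eq_zero.mp hy0 with h | h; exact absurd h htyne; exact h
  have h2 : tz * ‖v‖ ^ 2 + 2 * ⟪v, x⟫ = 0 := by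
    rcases mul_eq_zero.mp hz0 with h | h; exact absurd h htzne; exact h
  have hvnorm : ‖v‖ ^ 2 ≠ 0 := pow_ne_zero _ (norm_ne_zero_iff.mpr hvne)
  have : ty = tz := by
    have : ty * ‖v‖ ^ 2 = tz * ‖v‖ ^ 2 := by linarith
    exact mul_right_cancel₀ hvnorm this
  exact hyz (by rw [hty, htz, this])

set_option maxHeartbeats 1000000 in
lemma coplanar_of_thick {x y z : E3} (hx : ‖x‖ = 1) (hy : ‖y‖ = 1) (hz : ‖z‖ = 1)
    (hxy : x ≠ y) (hyz : y ≠ z) (hxz : x ≠ z)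
    (hp0 : x - ⟪x, y⟫ • y ≠ 0)
    (h : 1 ≤ circumradius3 x y z) : ∃ a b : ℝ, z = a • x + b • y := by
  have hncol := not_collinear_sphere hx hy hz hxy hyz hxz
  rw [circumradius3, if_neg hncol] at h
  set a := dist x y with hadef
  set b := dist y z with hbdef
  set c := dist z x with hcdef
  set H := (a + b + c) * (-a + b + c) * (a - b + c) * (a + b - c) with hHdef
  rw [ENNReal.one_le_ofReal] at h
  have hs0 : 0 < Real.sqrt H := by
    rcases (Real.sqrt_nonneg H).eq_or_lt with h0 | h0
    · rw [← h0, div_zero] at h; linarith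
    · exact h0
  have habc : Real.sqrt H ≤ a * b * c := (one_le_div hs0).mp h
  have hHpos : 0 < H := Real.sqrt_pos.mp hs0
  have hH : H ≤ (a * b * c) ^ 2 := by
    calc H = Real.sqrt H ^ 2 := (Real.sq_sqrt hHpos.le).symm
    _ ≤ (a * b * c) ^ 2 := by
        apply pow_le_pow_left₀ (Real.sqrt_nonneg H) habc
  set u := ⟪x, y⟫ with hudef
  set v := ⟪y, z⟫ with hvdef
  set w := ⟪x, z⟫ with hwdef
  have ha2 : a ^ 2 = 2 - 2 * u := by
    rw [hadef, dist_eq_norm, norm_sub_sq_real, hx, hy]; ring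
  have hb2 : b ^ 2 = 2 - 2 * v := by
    rw [hbdef, dist_eq_norm, norm_sub_sq_real, hy, hz]; ring
  have hzx : (⟪z, x⟫ : ℝ) = w := by rw [hwdef, real_inner_comm]
  have hyx : (⟪y, x⟫ : ℝ) = u := by rw [hudef, real_inner_comm]
  have hzy : (⟪z, y⟫ : ℝ) = v := by rw [hvdef, real_inner_comm]
  have hc2 : c ^ 2 = 2 - 2 * w := by
    rw [hcdef, dist_eq_norm, norm_sub_sq_real, hz, hx, hzx]; ring
  have hH' : (a + b + c) * (-a + b + c) * (a - b + c) * (a + b - c) ≤ (a * b * c) ^ 2 :=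
    hHdef ▸ hH
  have key : (1 - u ^ 2) * (1 - v ^ 2) ≤ (w - u * v) ^ 2 := by
    have hu' : u = 1 - a ^ 2 / 2 := by linarith
    have hv' : v = 1 - b ^ 2 / 2 := by linarith
    have hw' : w = 1 - c ^ 2 / 2 := by linarith
    rw [hu', hv', hw']
    nlinarith [hH']
  set p := x - u • y with hpdef
  set q := z - v • y with hqdef
  have hyy : ⟪y, y⟫ = 1 := by rw [real_inner_self_eq_norm_mul_norm, hy]; norm_num
  have hxx : ⟪x, x⟫ = 1 := by rw [real_inner_self_eq_norm_mul_norm, hx]; norm_num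
  have hzz : ⟪z, z⟫ = 1 := by rw [real_inner_self_eq_norm_mul_norm, hz]; norm_num
  have hpq : ⟪p, q⟫ = w - u * v := by
    simp only [hpdef, hqdef, inner_sub_left, inner_sub_right, real_inner_smul_left,
      real_inner_smul_right, hyy, hyx, hzy, hzx, ← hudef, ← hvdef, ← hwdef]
    ring
  have hpp : ⟪p, p⟫ = 1 - u ^ 2 := by
    simp only [hpdef, inner_sub_left, inner_sub_right, real_inner_smul_left,
      real_inner_smul_right, hyy, hxx, hyx, ← hudef]
    ring
  have hqq : ⟪q, q⟫ = 1 - v ^ 2 := by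
    simp only [hqdef, inner_sub_left, inner_sub_right, real_inner_smul_left,
      real_inner_smul_right, hyy, hzz, hzy, ← hvdef]
    ring
  have hcs := real_inner_mul_inner_self_le p q
  rw [hpq, hpp, hqq] at hcs
  have heq : ⟪p, q⟫ ^ 2 = ⟪p, p⟫ * ⟪q, q⟫ := by rw [hpq, hpp, hqq]; nlinarith [key, hcs]
  have hqpc : (⟪q, p⟫ : ℝ) = ⟪p, q⟫ := real_inner_comm p q
  have hr : ⟪p, p⟫ • q - ⟪p, q⟫ • p = 0 := by
    rw [← inner_self_eq_zero (𝕜 := ℝ)]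
    simp only [inner_sub_left, inner_sub_right, real_inner_smul_left, real_inner_smul_right,
      hqpc]
    linear_combination (-(⟪p, p⟫ : ℝ)) * heq
  have hA : ⟪p, p⟫ ≠ 0 := by
    rw [Ne, inner_self_eq_zero]; exact hp0
  set k := (⟪p, q⟫ : ℝ) / ⟪p, p⟫ with hkdef
  have hqp : q = k • p := by
    have h1 : ⟪p, p⟫ • q = ⟪p, q⟫ • p := by rwa [sub_eq_zero] at hr
    rw [hkdef, div_eq_mul_inv, mul_comm, mul_smul, ← h1, smul_smul, inv_mul_cancel₀ hA, one_smul]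
  refine ⟨k, v - k * u, ?_⟩
  have hz' : z = q + v • y := by rw [hqdef]; abel
  rw [hz', hqp, hpdef]
  module

lemma no_continuous_periodic_injOn (f : ℝ → ℝ) (hf : Continuous f)
    (hper : Periodic f (2 * π)) (hinj : InjOn f (Ico 0 (2 * π))) : False := by
  have hpi : (0:ℝ) < 2 * π := by positivity
  obtain ⟨tb, htb, hmax⟩ := (isCompact_Icc (a := (0:ℝ)) (b := 2*π)).exists_isMaxOn
      (nonempty_Icc.mpr hpi.le) hf.continuousOn
  obtain ⟨ta, hta, hmin⟩ := (isCompact_Icc (a := (0:ℝ)) (b := 2*π)).exists_isMinOn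
      (nonempty_Icc.mpr hpi.le) hf.continuousOn
  rw [mem_Icc] at hta htb
  have hmax' : ∀ x ∈ Icc (0:ℝ) (2*π), f x ≤ f tb := fun x hx => hmax hx
  have hmin' : ∀ x ∈ Icc (0:ℝ) (2*π), f ta ≤ f x := fun x hx => hmin hx
  have sub : ∀ s t : ℝ, 0 ≤ s → s < t → t ≤ 2*π →
      ∀ t₁ ∈ Ioo s t, ∀ t₂ ∈ Ioo t (s + 2*π), f t₁ = f t₂ → False := by
    intro s t hs hst ht t₁ ht₁ t₂ ht₂ hf12
    obtain ⟨h11, h12⟩ := ht₁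
    obtain ⟨h21, h22⟩ := ht₂
    have e1 : t₁ ∈ Ico 0 (2*π) := ⟨by linarith, by linarith⟩
    rcases lt_or_ge t₂ (2*π) with h2 | h2
    · have e2 : t₂ ∈ Ico 0 (2*π) := ⟨by linarith, h2⟩
      have := hinj e1 e2 hf12
      linarith
    · have e2 : t₂ - 2*π ∈ Ico 0 (2*π) := ⟨by linarith, by linarith⟩
      have hfp : f (t₂ - 2*π) = f t₂ := by
        have := hper (t₂ - 2*π)
        simpa using this.symm
      have := hinj e1 e2 (by rw [hfp]; exact hf12)
      linarith
  by_cases hc : f ta = f tb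
  · have hmem0 : (0:ℝ) ∈ Icc (0:ℝ) (2*π) := ⟨le_refl _, hpi.le⟩
    have hmemπ : π ∈ Icc (0:ℝ) (2*π) := ⟨pi_pos.le, by linarith [pi_pos]⟩
    have h0 : f 0 = f π := by
      have := hmin' 0 hmem0
      have := hmax' 0 hmem0
      have := hmin' π hmemπ
      have := hmax' π hmemπ
      linarith
    have := hinj ⟨le_refl _, hpi⟩ ⟨pi_pos.le, by linarith [pi_pos]⟩ h0
    exact pi_pos.ne this
  · have hlt : f ta < f tb := lt_of_le_of_ne (hmin' tb (mem_Icc.mpr htb)) hc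
    set m := (f ta + f tb) / 2 with hm
    rcases lt_trichotomy ta tb with h | h | h
    · have hmem : m ∈ Ioo (f ta) (f tb) := ⟨by simp [hm]; linarith, by simp [hm]; linarith⟩
      obtain ⟨t₁, ht₁, hft₁⟩ := intermediate_value_Ioo h.le hf.continuousOn hmem
      have h2 : tb ≤ ta + 2*π := by linarith
      have hmem2 : m ∈ Ioo (f (ta + 2*π)) (f tb) := by rw [hper ta]; exact hmem
      obtain ⟨t₂, ht₂, hft₂⟩ := intermediate_value_Ioo' h2 hf.continuousOn hmem2
      exact sub ta tb hta.1 h htb.2 t₁ ht₁ t₂ ht₂ (hft₁.trans hft₂.symm)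
    · exact hc (by rw [h])
    · have hmem : m ∈ Ioo (f ta) (f tb) := ⟨by simp [hm]; linarith, by simp [hm]; linarith⟩
      obtain ⟨t₁, ht₁, hft₁⟩ := intermediate_value_Ioo' h.le hf.continuousOn hmem
      have h2 : ta ≤ tb + 2*π := by linarith
      have hmem2 : m ∈ Ioo (f ta) (f (tb + 2*π)) := by rw [hper tb]; exact hmem
      obtain ⟨t₂, ht₂, hft₂⟩ := intermediate_value_Ioo h2 hf.continuousOn hmem2
      exact sub tb ta htb.1 h hta.2 t₁ ht₁ t₂ ht₂ (hft₁.trans hft₂.symm)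

lemma stereo_inj {c₁ s₁ c₂ s₂ : ℝ} (h₁ : c₁ ^ 2 + s₁ ^ 2 = 1) (h₂ : c₂ ^ 2 + s₂ ^ 2 = 1)
    (hc₁ : c₁ ≠ 1) (hc₂ : c₂ ≠ 1) (h : s₁ / (1 - c₁) = s₂ / (1 - c₂)) :
    c₁ = c₂ ∧ s₁ = s₂ := by
  have d₁ : 1 - c₁ ≠ 0 := sub_ne_zero.mpr (Ne.symm hc₁)
  have d₂ : 1 - c₂ ≠ 0 := sub_ne_zero.mpr (Ne.symm hc₂)
  rw [div_eq_div_iff (by simpa using d₁) (by simpa using d₂)] at h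
  have e1 : (s₁ * (1 - c₂)) ^ 2 = (s₂ * (1 - c₁)) ^ 2 := by rw [h]
  have e2 : (1 - c₁) * (1 - c₂) * (2 * c₁ - 2 * c₂) = 0 := by
    linear_combination e1 - (1 - c₂)^2 * h₁ + (1 - c₁)^2 * h₂
  have hcc : c₁ = c₂ := by
    rcases mul_eq_zero.mp e2 with h' | h'
    · rcases mul_eq_zero.mp h' with h'' | h''
      · exact absurd h'' d₁
      · exact absurd h'' d₂
    · linarith
  refine ⟨hcc, ?_⟩
  rw [hcc] at h
  exact mul_right_cancel₀ d₂ h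

lemma sub_proj_ne_zero {x y : E3} (hx : ‖x‖ = 1) (hy : ‖y‖ = 1)
    (h1 : x ≠ y) (h2 : x ≠ -y) : x - ⟪x, y⟫ • y ≠ 0 := by
  intro h
  have hxe : x = ⟪x, y⟫ • y := by rwa [sub_eq_zero] at h
  have hn : ‖x‖ = ‖(⟪x, y⟫ : ℝ) • y‖ := congrArg norm hxe
  rw [norm_smul, Real.norm_eq_abs, hx, hy, mul_one] at hn
  rcases (abs_eq (by norm_num : (0:ℝ) ≤ 1)).mp hn.symm with h' | h'
  · rw [h', one_smul] at hxe; exact h1 hxe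
  · rw [h', neg_smul, one_smul] at hxe; exact h2 hxe

set_option maxHeartbeats 1000000 in
theorem thickness_one_curve_is_great_circle (γ : ℝ → E3)
    (hper : Periodic γ (2 * π)) (hC1 : ContDiff ℝ 1 γ)
    (hreg : ∀ t, deriv γ t ≠ 0)
    (hsimple : InjOn γ (Ico 0 (2 * π)))
    (hsphere : range γ ⊆ sphere (0 : E3) 1)
    (hthick : thickness (range γ) = 1) :
    ∃ v : E3, v ≠ 0 ∧ range γ = {x ∈ sphere (0 : E3) 1 | ⟪v, x⟫ = 0} := by
  classical
  have hπ : (0:ℝ) < π := Real.pi_pos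
  have hunit : ∀ t, ‖γ t‖ = 1 := fun t => mem_sphere_zero_iff_norm.mp (hsphere ⟨t, rfl⟩)
  have hunit' : ∀ p ∈ range γ, ‖p‖ = 1 := by rintro p ⟨t, rfl⟩; exact hunit t
  have hkey : ∀ x ∈ range γ, ∀ y ∈ range γ, ∀ z ∈ range γ, x ≠ y → y ≠ z → x ≠ z →
      1 ≤ circumradius3 x y z := by
    intro x hx y hy z hz h1 h2 h3
    rw [← hthick]
    exact sInf_le ⟨x, hx, y, hy, z, hz, h1, h2, h3, rfl⟩
  have h3pts : ∀ s t : ℝ, s ∈ Ico 0 (2*π) → t ∈ Ico 0 (2*π) → s ≠ t → γ s ≠ γ t :=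
    fun s t hs ht hst heq => hst (hsimple hs ht heq)
  have hgt3 : (3:ℝ) < π := pi_gt_three
  have m0 : (0:ℝ) ∈ Ico (0:ℝ) (2*π) := ⟨le_refl _, by linarith⟩
  have m2 : (2:ℝ) ∈ Ico (0:ℝ) (2*π) := ⟨by norm_num, by linarith⟩
  have m4 : (4:ℝ) ∈ Ico (0:ℝ) (2*π) := ⟨by norm_num, by linarith⟩
  obtain ⟨x, y, hxr, hyr, hxy, hxny⟩ :
      ∃ x y : E3, x ∈ range γ ∧ y ∈ range γ ∧ x ≠ y ∧ x ≠ -y := by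
    by_cases hAB : γ 0 = -γ 2
    · refine ⟨γ 0, γ 4, ⟨0, rfl⟩, ⟨4, rfl⟩, h3pts 0 4 m0 m4 (by norm_num), ?_⟩
      intro h
      apply h3pts 2 4 m2 m4 (by norm_num)
      exact neg_injective (hAB.symm.trans h)
    · exact ⟨γ 0, γ 2, ⟨0, rfl⟩, ⟨2, rfl⟩, h3pts 0 2 m0 m2 (by norm_num), hAB⟩
  have hx1 : ‖x‖ = 1 := hunit' x hxr
  have hy1 : ‖y‖ = 1 := hunit' y hyr
  have hp0 : x - ⟪x, y⟫ • y ≠ 0 := sub_proj_ne_zero hx1 hy1 hxy hxny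
  have hspan : ∀ z ∈ range γ, ∃ a b : ℝ, z = a • x + b • y := by
    intro z hzr
    by_cases h1 : z = x
    · exact ⟨1, 0, by rw [h1, one_smul, zero_smul, add_zero]⟩
    by_cases h2 : z = y
    · exact ⟨0, 1, by rw [h2, zero_smul, one_smul, zero_add]⟩
    · exact coplanar_of_thick hx1 hy1 (hunit' z hzr) hxy (fun h => h2 h.symm)
        (fun h => h1 h.symm) hp0
        (hkey x hxr y hyr z hzr hxy (fun h => h2 h.symm) (fun h => h1 h.symm))
  have hKtop : Submodule.span ℝ ({x, y} : Set E3) ≠ ⊤ := by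
    intro htop
    have hc : ({x, y} : Set E3).toFinset.card ≤ 2 := by
      rw [Set.toFinset_insert, Set.toFinset_singleton]
      exact le_trans (Finset.card_insert_le _ _) (by simp)
    have h1 := finrank_span_le_card (R := ℝ) ({x, y} : Set E3)
    rw [htop, finrank_top, finrank_euclideanSpace_fin] at h1
    omega
  obtain ⟨v, hvK, hv0⟩ : ∃ v, v ∈ (Submodule.span ℝ ({x, y} : Set E3))ᗮ ∧ v ≠ 0 := by
    apply Submodule.exists_mem_ne_zero_of_ne_bot
    intro h
    exact hKtop (Submodule.orthogonal_eq_bot_iff.mp h)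
  have hvx : (⟪v, x⟫ : ℝ) = 0 := by
    rw [real_inner_comm]
    exact (Submodule.mem_orthogonal _ _).mp hvK x (Submodule.subset_span (by simp))
  have hvy : (⟪v, y⟫ : ℝ) = 0 := by
    rw [real_inner_comm]
    exact (Submodule.mem_orthogonal _ _).mp hvK y (Submodule.subset_span (by simp))
  have hfwd : ∀ p ∈ range γ, (⟪v, p⟫ : ℝ) = 0 := by
    intro p hp
    obtain ⟨a, b, hab⟩ := hspan p hp
    rw [hab, inner_add_right, real_inner_smul_right, real_inner_smul_right, hvx, hvy]
    ring
  refine ⟨v, hv0, Set.Subset.antisymm ?_ ?_⟩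
  · intro p hp
    exact ⟨hsphere hp, hfwd p hp⟩
  · rintro q ⟨hqs, hqv⟩
    by_contra hqr
    have hq1 : ‖q‖ = 1 := mem_sphere_zero_iff_norm.mp hqs
    obtain ⟨e, her, he1, heq', heq2⟩ : ∃ e, e ∈ range γ ∧ ‖e‖ = 1 ∧ e ≠ q ∧ e ≠ -q := by
      by_cases hxq : x = -q
      · exact ⟨y, hyr, hy1, fun h => hqr (h ▸ hyr), fun h => hxy (by rw [hxq, h])⟩
      · exact ⟨x, hxr, hx1, fun h => hqr (h ▸ hxr), hxq⟩
    have hqq1 : (⟪q, q⟫ : ℝ) = 1 := by rw [real_inner_self_eq_norm_mul_norm, hq1]; norm_num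
    set e' : E3 := e - ⟪e, q⟫ • q with he'def
    have he'0 : e' ≠ 0 := sub_proj_ne_zero he1 hq1 heq' heq2
    set e₂ : E3 := ‖e'‖⁻¹ • e' with he₂def
    have hn0 : ‖e'‖ ≠ 0 := norm_ne_zero_iff.mpr he'0
    have he₂1 : ‖e₂‖ = 1 := by
      rw [he₂def, norm_smul, norm_inv, norm_norm, inv_mul_cancel₀ hn0]
    have hqe' : (⟪q, e'⟫ : ℝ) = 0 := by
      rw [he'def, inner_sub_right, real_inner_smul_right, hqq1, real_inner_comm q e]
      ring
    have hqe₂ : (⟪q, e₂⟫ : ℝ) = 0 := by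
      rw [he₂def, real_inner_smul_right, hqe', mul_zero]
    have he₂q : (⟪e₂, q⟫ : ℝ) = 0 := by rw [real_inner_comm]; exact hqe₂
    have hve : (⟪v, e⟫ : ℝ) = 0 := hfwd e her
    have hve₂ : (⟪v, e₂⟫ : ℝ) = 0 := by
      rw [he₂def, real_inner_smul_right, he'def, inner_sub_right, real_inner_smul_right,
        hve, hqv]
      ring
    have he₂e₂ : (⟪e₂, e₂⟫ : ℝ) = 1 := by
      rw [real_inner_self_eq_norm_mul_norm, he₂1]; norm_num
    have hON : Orthonormal ℝ ![q, e₂] := by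
      rw [orthonormal_iff_ite]
      intro i j
      fin_cases i <;> fin_cases j <;> simp [hqq1, hqe₂, he₂q, he₂e₂, hq1, he₂1]
    have hli := hON.linearIndependent
    have hra : Set.range ![q, e₂] = ({q, e₂} : Set E3) := by
      rw [Matrix.range_cons_cons_empty]
    have hsple : Submodule.span ℝ ({q, e₂} : Set E3) ≤ (ℝ ∙ v)ᗮ := by
      rw [Submodule.span_le]
      intro p hp
      simp only [Set.mem_insert_iff, Set.mem_singleton_iff] at hp
      rcases hp with rfl | rfl
      · exact Submodule.mem_orthogonal_singleton_iff_inner_right.mpr hqv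
      · exact Submodule.mem_orthogonal_singleton_iff_inner_right.mpr hve₂
    have hrk1 : Module.finrank ℝ (Submodule.span ℝ ({q, e₂} : Set E3)) = 2 := by
      rw [← hra, finrank_span_eq_card hli]
      simp
    have hrk2 : Module.finrank ℝ ((ℝ ∙ v)ᗮ : Submodule ℝ E3) = 2 := by
      have h1 := Submodule.finrank_add_finrank_orthogonal (K := (ℝ ∙ v : Submodule ℝ E3))
      rw [finrank_span_singleton hv0, finrank_euclideanSpace_fin] at h1
      omega
    have hspeq : Submodule.span ℝ ({q, e₂} : Set E3) = (ℝ ∙ v)ᗮ :=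
      Submodule.eq_of_le_of_finrank_le hsple (by rw [hrk1, hrk2])
    have hcoord : ∀ p : E3, ‖p‖ = 1 → (⟪v, p⟫ : ℝ) = 0 →
        p = ⟪q, p⟫ • q + ⟪e₂, p⟫ • e₂ ∧ (⟪q, p⟫ : ℝ) ^ 2 + (⟪e₂, p⟫ : ℝ) ^ 2 = 1 := by
      intro p hp hvp
      have hpm : p ∈ Submodule.span ℝ ({q, e₂} : Set E3) := by
        rw [hspeq]
        exact Submodule.mem_orthogonal_singleton_iff_inner_right.mpr hvp
      rw [Submodule.mem_span_pair] at hpm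
      obtain ⟨cA, cB, hcd⟩ := hpm
      have hca : (⟪q, p⟫ : ℝ) = cA := by
        rw [← hcd, inner_add_right, real_inner_smul_right, real_inner_smul_right, hqq1, hqe₂]
        ring
      have hcb : (⟪e₂, p⟫ : ℝ) = cB := by
        rw [← hcd, inner_add_right, real_inner_smul_right, real_inner_smul_right, he₂e₂, he₂q]
        ring
      have hrep : p = ⟪q, p⟫ • q + ⟪e₂, p⟫ • e₂ := by rw [hca, hcb, hcd]
      refine ⟨hrep, ?_⟩
      have hip : (⟪p, p⟫ : ℝ) = 1 := by rw [real_inner_self_eq_norm_mul_norm, hp]; norm_num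
      have hexp : (⟪p, p⟫ : ℝ) = cA ^ 2 + cB ^ 2 := by
        rw [← hcd]
        simp only [inner_add_left, inner_add_right, real_inner_smul_left,
          real_inner_smul_right, hqq1, hqe₂, he₂q, he₂e₂]
        ring
      rw [hca, hcb]
      rw [hip] at hexp
      linarith
    have hcne : ∀ t, (⟪q, γ t⟫ : ℝ) ≠ 1 := by
      intro t h1
      obtain ⟨hrep, hsum⟩ := hcoord (γ t) (hunit t) (hfwd (γ t) ⟨t, rfl⟩)
      have hs0 : (⟪e₂, γ t⟫ : ℝ) = 0 := by nlinarith [hsum]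
      exact hqr ⟨t, by rw [hrep, h1, hs0, one_smul, zero_smul, add_zero]⟩
    set σ : ℝ → ℝ := fun t => ⟪e₂, γ t⟫ / (1 - ⟪q, γ t⟫) with hσdef
    have hcont : Continuous σ := by
      apply Continuous.div
      · exact Continuous.inner continuous_const hC1.continuous
      · exact Continuous.sub continuous_const (Continuous.inner continuous_const hC1.continuous)
      · intro t h0
        exact hcne t (by linarith [sub_eq_zero.mp h0])
    have hperσ : Periodic σ (2*π) := by
      intro t
      simp only [hσdef]
      rw [hper t]
    have hinjσ : InjOn σ (Ico 0 (2*π)) := by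
      intro t₁ h₁ t₂ h₂ hst
      apply hsimple h₁ h₂
      obtain ⟨hrep₁, hsum₁⟩ := hcoord (γ t₁) (hunit t₁) (hfwd (γ t₁) ⟨t₁, rfl⟩)
      obtain ⟨hrep₂, hsum₂⟩ := hcoord (γ t₂) (hunit t₂) (hfwd (γ t₂) ⟨t₂, rfl⟩)
      simp only [hσdef] at hst
      obtain ⟨hceq, hseq⟩ := stereo_inj hsum₁ hsum₂ (hcne t₁) (hcne t₂) hst
      rw [hrep₁, hrep₂, hceq, hseq]
    exact no_continuous_periodic_injOn σ hcont hperσ hinjσ
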